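/- Let φ₀: E₁ → E₀ and φ₁: E₂ → E₁ be separable isogenies of degrees ℓ₀ and ℓ₁ over a finite field k, such that every prime factor of ℓ₁ divides ℓ₀. Fix P ∈ E₀(k̄), and assume ker(φ₀ ∘ φ₁) is cyclic with all its points k(P)-rational. Then every point Q ∈ (φ₀ ∘ φ₁)⁻¹(P) satisfying [k(φ₁(Q)) : k(P)] = ℓ₀ also satisfies [k(Q) : k(P)] = ℓ₀ℓ₁. -/

import Mathlib

open WeierstrassCurve WeierstrassCurve.Affine IntermediateField
open scoped Classical

noncomputable section

/-- The algebraic closure of `k`, where points of our curves live. -/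
abbrev kbar (k : Type) [Field k] := AlgebraicClosure k

variable {k : Type} [Field k]

/-- The field of definition `k(P)` of a point `P` on a Weierstrass curve, as an
intermediate field of `k̄/k`: the subfield generated by the coordinates of `P`. -/
def ptField (W : WeierstrassCurve k) : (W.toAffine.baseChange (kbar k)).Point → IntermediateField k (kbar k)
  | .zero => ⊥
  | .some (x := x) (y := y) _ => adjoin k {x, y}

/-- The degree `[E⊔F : E]` of the compositum of two intermediate fields over the first;
when `E ≤ E⊔F = F` this is the degree `[F : E]`. -/
def extDeg {k K : Type*} [Field k] [Field K] [Algebra k K]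
    (E F : IntermediateField k K) : ℕ :=
  Module.finrank E (IntermediateField.extendScalars (le_sup_left : E ≤ E ⊔ F))

/-- A separable isogeny of degree `ℓ` between (the groups of `k̄`-points of) two
Weierstrass curves defined over a finite field `k`, encoded by its action on points:
a surjective group homomorphism, commuting with the Galois action (defined over `k`),
whose kernel has exactly `ℓ` elements (for an isogeny of degree `ℓ`, separability is
equivalent to the kernel having `ℓ` geometric points). -/
structure SepIsogeny (W₁ W₀ : WeierstrassCurve k) (ℓ : ℕ) : Type where
  hom : (W₁.toAffine.baseChange (kbar k)).Point →+ (W₀.toAffine.baseChange (kbar k)).Point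
  surj : Function.Surjective hom
  card_ker : Nat.card hom.ker = ℓ
  equivariant : ∀ σ : kbar k →ₐ[k] kbar k, ∀ P, hom (Point.map (W' := W₁.toAffine) σ P) = Point.map (W' := W₀.toAffine) σ (hom P)

end

/- ### Auxiliary lemmas -/

set_option synthInstance.maxHeartbeats 1000000
set_option maxHeartbeats 1000000

noncomputable section AuxLemmas

variable {k : Type} [Field k]

lemma nt_lemma {l0 l1 m : ℕ} (h0 : l0 ≠ 0) (h1 : l1 ≠ 0) (hm0 : m ≠ 0) (hm : m ∣ l1)
    (hdvd : ∀ p : ℕ, p.Prime → p ∣ l1 → p ∣ l0)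
    (hlcm : l0 * l1 ∣ Nat.lcm (l0 * m) l1) : m = l1 := by
  refine Nat.dvd_antisymm hm ?_
  rw [← Nat.factorization_le_iff_dvd h1 hm0, Finsupp.le_def]
  intro p
  by_cases hp : p.Prime
  · by_contra hlt
    push_neg at hlt
    have hpl1 : p ∣ l1 := by
      have := (Nat.Prime.pow_dvd_iff_le_factorization hp h1).mpr
        (show 1 ≤ l1.factorization p by omega)
      simpa using this
    have hpl0 : p ∣ l0 := hdvd p hp hpl1
    have ha : 1 ≤ l0.factorization p := (Nat.Prime.factorization_pos_of_dvd hp h0 hpl0)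
    have hfact := (Nat.factorization_le_iff_dvd (by positivity)
      (Nat.lcm_ne_zero (by positivity) h1) |>.mpr hlcm) p
    rw [Nat.factorization_lcm (by positivity) h1,
      Nat.factorization_mul h0 h1] at hfact
    rw [Nat.factorization_mul h0 hm0] at hfact
    simp only [Finsupp.coe_add, Finsupp.sup_apply, Pi.add_apply] at hfact
    have := le_sup_iff.mp hfact
    omega
  · simp [Nat.factorization_eq_zero_of_not_prime _ hp]

lemma group_lemma {A B : Type*} [AddCommGroup A] [AddCommGroup B]
    (f : A →+ B) (K H : AddSubgroup A)
    (hHK : H ≤ K) (hcyc : IsAddCyclic ↥K)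
    {l0 l1 : ℕ} (h0 : l0 ≠ 0) (h1 : l1 ≠ 0)
    (hK : Nat.card ↥K = l0 * l1)
    (hN : Nat.card ↥f.ker = l1)
    (hH : Nat.card ↥(H.map f) = l0)
    (hKmap : Nat.card ↥(K.map f) = l0)
    (hdvd : ∀ p, p.Prime → p ∣ l1 → p ∣ l0) :
    Nat.card ↥H = l0 * l1 := by
  haveI : Finite ↥K := Nat.finite_of_card_ne_zero (by rw [hK]; exact Nat.mul_ne_zero h0 h1)
  haveI : Finite ↥H := Finite.of_injective _ (AddSubgroup.inclusion_injective hHK)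
  haveI : Finite ↥f.ker := Nat.finite_of_card_ne_zero (by rw [hN]; exact h1)
  haveI : Finite ↥(H ⊓ f.ker) :=
    Finite.of_injective _ (AddSubgroup.inclusion_injective (inf_le_right : H ⊓ f.ker ≤ f.ker))
  haveI : Finite ↥(K.map f) := Nat.finite_of_card_ne_zero (by rw [hKmap]; exact h0)
  set m := Nat.card ↥(H ⊓ f.ker) with hm
  have hm0 : m ≠ 0 := Nat.card_ne_zero.mpr ⟨⟨0, zero_mem _⟩, inferInstance⟩
  have hmdvd : m ∣ l1 := hN ▸ AddSubgroup.card_dvd_of_le (inf_le_right : H ⊓ f.ker ≤ f.ker)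
  have hcardH : Nat.card ↥H = l0 * m := by
    set g := f.comp H.subtype with hg
    have hker : g.ker = (H ⊓ f.ker).addSubgroupOf H := by
      ext x
      simp [hg, AddMonoidHom.mem_ker, AddSubgroup.mem_addSubgroupOf, x.2]
    have hrange : g.range = H.map f := by
      ext y
      constructor
      · rintro ⟨x, rfl⟩; exact ⟨x.1, x.2, rfl⟩
      · rintro ⟨x, hx, rfl⟩; exact ⟨⟨x, hx⟩, rfl⟩
    have h1' : Nat.card ↥H = Nat.card (↥H ⧸ g.ker) * Nat.card g.ker :=
      AddSubgroup.card_eq_card_quotient_mul_card_addSubgroup g.ker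
    have h2' : Nat.card (↥H ⧸ g.ker) = l0 := by
      rw [Nat.card_congr (QuotientAddGroup.quotientKerEquivRange g).toEquiv, hrange, hH]
    have h3' : Nat.card g.ker = m := by
      rw [hker, hm]
      exact Nat.card_congr (AddSubgroup.addSubgroupOfEquivOfLe
        (inf_le_left : H ⊓ f.ker ≤ H)).toEquiv
    rw [h1', h2', h3']
  have hmapeq : H.map f = K.map f := by
    have hle : H.map f ≤ K.map f := AddSubgroup.map_mono hHK
    refine SetLike.coe_injective (Set.eq_of_subset_of_ncard_le hle ?_ (Set.toFinite _))
    rw [← Nat.card_coe_set_eq, ← Nat.card_coe_set_eq]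
    simp only [SetLike.coe_sort_coe, hH, hKmap, le_refl]
  have hsplit : ∀ x ∈ K, ∃ h ∈ H, x - h ∈ f.ker := by
    intro x hx
    have : f x ∈ H.map f := hmapeq ▸ AddSubgroup.mem_map_of_mem f hx
    obtain ⟨h, hh, hfh⟩ := this
    exact ⟨h, hh, by simp [AddMonoidHom.mem_ker, map_sub, hfh]⟩
  set d := Nat.card ↥H with hd
  have hkill : ∀ x ∈ K, Nat.lcm d l1 • x = 0 := by
    intro x hx
    obtain ⟨h, hh, ht⟩ := hsplit x hx
    have e1 : d • h = 0 := by
      have := card_nsmul_eq_zero' (x := (⟨h, hh⟩ : ↥H))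
      exact congrArg Subtype.val this
    have e2 : l1 • (x - h) = 0 := by
      have := card_nsmul_eq_zero' (x := (⟨x - h, ht⟩ : ↥f.ker))
      rw [hN] at this
      exact congrArg Subtype.val this
    obtain ⟨t, hth⟩ := Nat.dvd_lcm_left d l1
    obtain ⟨s, hts⟩ := Nat.dvd_lcm_right d l1
    have f1 : Nat.lcm d l1 • h = 0 := by
      rw [hth, mul_comm, mul_smul, e1, smul_zero]
    have f2 : Nat.lcm d l1 • (x - h) = 0 := by
      rw [hts, mul_comm, mul_smul, e2, smul_zero]
    have f3 : Nat.lcm d l1 • x = Nat.lcm d l1 • h + Nat.lcm d l1 • (x - h) := by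
      rw [← smul_add]
      congr 1
      abel
    rw [f3, f1, f2, add_zero]
  have hexp : (l0 * l1 : ℕ) ∣ Nat.lcm d l1 := by
    rw [← hK, ← IsAddCyclic.exponent_eq_card]
    refine AddMonoid.exponent_dvd_of_forall_nsmul_eq_zero fun g => ?_
    exact Subtype.ext (by simpa using hkill g.1 g.2)
  have : m = l1 := nt_lemma h0 h1 hm0 hmdvd hdvd (by rwa [hcardH] at hexp)
  rw [hcardH, this]

lemma some_congr {W : WeierstrassCurve k} {x₁ y₁ x₂ y₂ : kbar k}
    (h₁ : (W.toAffine.baseChange (kbar k)).Nonsingular x₁ y₁)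
    (h₂ : (W.toAffine.baseChange (kbar k)).Nonsingular x₂ y₂)
    (hx : x₁ = x₂) (hy : y₁ = y₂) : (Point.some _ _ h₁ : (W.toAffine.baseChange (kbar k)).Point) = Point.some _ _ h₂ := by
  subst hx; subst hy; rfl

lemma coords_mem {W : WeierstrassCurve k} {x y : kbar k}
    (h : (W.toAffine.baseChange (kbar k)).Nonsingular x y) :
    x ∈ ptField W (.some _ _ h) ∧ y ∈ ptField W (.some _ _ h) :=
  ⟨subset_adjoin k _ (by simp), subset_adjoin k _ (by simp)⟩

lemma map_eq_self_of_fix {W : WeierstrassCurve k} (f : kbar k →ₐ[k] kbar k)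
    (R : (W.toAffine.baseChange (kbar k)).Point) (hf : ∀ z ∈ ptField W R, f z = z) : Point.map (W' := W.toAffine) f R = R := by
  cases R with
  | zero => rfl
  | @some x y h =>
    rw [Point.map_some]
    exact some_congr _ _ (hf _ (coords_mem h).1) (hf _ (coords_mem h).2)

lemma agree_on_ptField {W : WeierstrassCurve k} (f g : kbar k →ₐ[k] kbar k)
    (R : (W.toAffine.baseChange (kbar k)).Point) (h : Point.map (W' := W.toAffine) f R = Point.map (W' := W.toAffine) g R) :
    ∀ z ∈ ptField W R, f z = g z := by
  cases R with
  | zero =>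
    intro z hz
    obtain ⟨w, rfl⟩ := IntermediateField.mem_bot.mp hz
    simp [AlgHom.commutes]
  | @some x y hR =>
    rw [Point.map_some, Point.map_some] at h
    obtain ⟨hx, hy⟩ := Point.some.inj h
    intro z hz
    induction hz using adjoin_induction with
    | mem w hw => rcases hw with rfl | rfl <;> assumption
    | algebraMap w => simp [AlgHom.commutes]
    | add a b _ _ ha hb => simp [ha, hb]
    | inv a _ ha => simp [ha]
    | mul a b _ _ ha hb => simp [ha, hb]

lemma map_eq_of_agree {W : WeierstrassCurve k} (f g : kbar k →ₐ[k] kbar k)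
    (R : (W.toAffine.baseChange (kbar k)).Point) (h : ∀ z ∈ ptField W R, f z = g z) :
    Point.map (W' := W.toAffine) f R = Point.map (W' := W.toAffine) g R := by
  cases R with
  | zero => rfl
  | @some x y hR =>
    rw [Point.map_some, Point.map_some]
    exact some_congr _ _ (h _ (coords_mem hR).1) (h _ (coords_mem hR).2)

/-- The equalizer of two algebra homs of fields, as an intermediate field. -/
def eqLocus (f g : kbar k →ₐ[k] kbar k) : IntermediateField k (kbar k) :=
  (AlgHom.equalizer f g).toIntermediateField fun x hx => by
    have hfg : f x = g x := hx
    show f x⁻¹ = g x⁻¹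
    rw [map_inv₀, map_inv₀, hfg]

lemma agree_on_sup {L F : IntermediateField k (kbar k)} {f g : kbar k →ₐ[k] kbar k}
    (hL : ∀ z ∈ L, f z = g z) (hF : ∀ z ∈ F, f z = g z) :
    ∀ z ∈ L ⊔ F, f z = g z := by
  intro z hz
  exact (sup_le (fun w hw => hL w hw) (fun w hw => hF w hw) :
    L ⊔ F ≤ eqLocus f g) hz

lemma card_range_eq_of_fiber {α β γ : Type*} (f : α → β) (g : α → γ)
    (h : ∀ a b, f a = f b ↔ g a = g b) :
    Nat.card (Set.range f) = Nat.card (Set.range g) := by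
  refine Nat.card_congr (Equiv.ofBijective
    (fun y => (⟨g (Exists.choose y.2), Set.mem_range_self _⟩ : Set.range g)) ⟨?_, ?_⟩)
  · rintro ⟨v, hv⟩ ⟨v', hv'⟩ hee
    have h1 : g (Exists.choose hv) = g (Exists.choose hv') := congrArg Subtype.val hee
    have h2 : f (Exists.choose hv) = f (Exists.choose hv') := (h _ _).mpr h1
    refine Subtype.ext ?_
    show v = v'
    rw [← Exists.choose_spec hv, ← Exists.choose_spec hv', h2]
  · rintro ⟨w, hw⟩
    refine ⟨⟨f hw.choose, Set.mem_range_self _⟩, Subtype.ext ?_⟩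
    have h3 : f (Exists.choose (Set.mem_range_self (f := f) hw.choose))
        = f hw.choose := Exists.choose_spec (Set.mem_range_self _)
    simpa using ((h _ _).mp h3).trans hw.choose_spec

variable (L : IntermediateField k (kbar k))

instance : Algebra.IsAlgebraic ↥L (kbar k) := Algebra.IsAlgebraic.tower_top (K := k) ↥L

instance : IsAlgClosure ↥L (kbar k) := ⟨inferInstance, inferInstance⟩

instance : Normal ↥L (kbar k) := inferInstance

/-- the `k`-algebra hom underlying an `L`-automorphism of `k̄`. -/
def resHom (σ : kbar k ≃ₐ[↥L] kbar k) : kbar k →ₐ[k] kbar k :=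
  σ.toAlgHom.restrictScalars k

lemma resHom_fixes (σ : kbar k ≃ₐ[↥L] kbar k) {z : kbar k} (hz : z ∈ L) :
    resHom L σ z = z := σ.commutes ⟨z, hz⟩

lemma ptField_fd (W : WeierstrassCurve k) (R : (W.toAffine.baseChange (kbar k)).Point) :
    FiniteDimensional k ↥(ptField W R) := by
  cases R with
  | zero => exact (inferInstance : FiniteDimensional k (⊥ : IntermediateField k (kbar k)))
  | some _ _ h =>
    exact IntermediateField.finiteDimensional_adjoin
      (fun x _ => Algebra.IsIntegral.isIntegral x)

lemma extDeg_pos (F : IntermediateField k (kbar k)) [FiniteDimensional k ↥L]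
    [FiniteDimensional k ↥F] : 0 < extDeg L F := by
  set M := L ⊔ F with hM
  set M' := IntermediateField.extendScalars (le_sup_left : L ≤ M) with hM'
  haveI : FiniteDimensional k ↥M := inferInstance
  haveI : FiniteDimensional k ↥M' := (inferInstance : FiniteDimensional k ↥M)
  haveI : FiniteDimensional ↥L ↥M' := FiniteDimensional.right k ↥L ↥M'
  exact Module.finrank_pos

lemma card_orbit [Fintype k] [FiniteDimensional k ↥L]
    (W : WeierstrassCurve k) (R : (W.toAffine.baseChange (kbar k)).Point) :
    Nat.card (Set.range (fun σ : kbar k ≃ₐ[↥L] kbar k => Point.map (W' := W.toAffine) (resHom L σ) R))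
      = extDeg L (ptField W R) := by
  set F := ptField W R with hF
  haveI : FiniteDimensional k ↥F := ptField_fd W R
  set M := L ⊔ F with hM
  set M' := IntermediateField.extendScalars (le_sup_left : L ≤ M) with hM'
  haveI : FiniteDimensional k ↥M := inferInstance
  haveI : FiniteDimensional k ↥M' := (inferInstance : FiniteDimensional k ↥M)
  haveI : FiniteDimensional ↥L ↥M' := FiniteDimensional.right k ↥L ↥M'
  haveI : Finite ↥L := Module.finite_of_finite k
  haveI : Algebra.IsSeparable ↥L ↥M' := inferInstance
  set res := fun σ : kbar k ≃ₐ[↥L] kbar k => (σ.toAlgHom.comp M'.val : ↥M' →ₐ[↥L] kbar k)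
    with hres
  have hcoords : F ≤ M := le_sup_right
  have hfib : ∀ σ τ : kbar k ≃ₐ[↥L] kbar k,
      Point.map (W' := W.toAffine) (resHom L σ) R = Point.map (W' := W.toAffine) (resHom L τ) R ↔ res σ = res τ := by
    intro σ τ
    constructor
    · intro h
      have h1 : ∀ z ∈ F, resHom L σ z = resHom L τ z := agree_on_ptField _ _ R h
      have h2 : ∀ z ∈ L, resHom L σ z = resHom L τ z := fun z hz => by
        rw [resHom_fixes L σ hz, resHom_fixes L τ hz]
      have h3 : ∀ z ∈ M, resHom L σ z = resHom L τ z := agree_on_sup h2 h1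
      exact AlgHom.ext fun m => h3 m.1 m.2
    · intro h
      refine map_eq_of_agree _ _ R fun z hz => ?_
      have hzM : z ∈ M := hcoords hz
      exact AlgHom.congr_fun h ⟨z, hzM⟩
  rw [card_range_eq_of_fiber _ res hfib]
  have hsurj : Function.Surjective res := by
    intro f
    have hbij := Algebra.IsAlgebraic.algHom_bijective (f.liftNormal (kbar k))
    refine ⟨AlgEquiv.ofBijective _ hbij, ?_⟩
    ext m
    show f.liftNormal (kbar k) (M'.val m) = f m
    simpa using AlgHom.liftNormal_commutes f (kbar k) m
  rw [Set.range_eq_univ.mpr hsurj, Nat.card_congr (Equiv.Set.univ _),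
    ← Field.finSepDegree_eq_of_isAlgClosed ↥L ↥M' (kbar k),
    Field.finSepDegree_eq_finrank_of_isSeparable]
  rfl

end AuxLemmas

/-- **main theorem.** Let `φ₀ : E₁ → E₀` and `φ₁ : E₂ → E₁` be separable
isogenies of degrees `ℓ₀`, `ℓ₁` over a finite field `k`, with every prime factor of `ℓ₁`
dividing `ℓ₀`.  Fix `P ∈ E₀(k̄)` and assume `ker (φ₀ ∘ φ₁)` is cyclic with all its points
`k(P)`-rational.  Then every `Q ∈ (φ₀ ∘ φ₁)⁻¹(P)` with `[k(φ₁(Q)) : k(P)] = ℓ₀` satisfies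
`[k(Q) : k(P)] = ℓ₀ℓ₁`. -/
theorem degree_of_composed_isogeny {k : Type} [Field k] [Fintype k]
    {W₂ W₁ W₀ : WeierstrassCurve k} {ℓ₀ ℓ₁ : ℕ}
    (φ₀ : SepIsogeny W₁ W₀ ℓ₀) (φ₁ : SepIsogeny W₂ W₁ ℓ₁)
    (hdvd : ∀ p : ℕ, p.Prime → p ∣ ℓ₁ → p ∣ ℓ₀) (P : (W₀.toAffine.baseChange (kbar k)).Point)
    (hcyc : IsAddCyclic (φ₀.hom.comp φ₁.hom).ker)
    (hrat : ∀ F ∈ (φ₀.hom.comp φ₁.hom).ker, ptField W₂ F ≤ ptField W₀ P) :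
    ∀ Q : (W₂.toAffine.baseChange (kbar k)).Point, φ₀.hom (φ₁.hom Q) = P →
      extDeg (ptField W₀ P) (ptField W₁ (φ₁.hom Q)) = ℓ₀ →
      extDeg (ptField W₀ P) (ptField W₂ Q) = ℓ₀ * ℓ₁ := by
  intro Q hQ hdeg
  set L := ptField W₀ P with hL
  haveI : FiniteDimensional k ↥L := ptField_fd W₀ P
  haveI : FiniteDimensional k ↥(ptField W₁ (φ₁.hom Q)) := ptField_fd _ _
  haveI : FiniteDimensional k ↥(ptField W₂ Q) := ptField_fd _ _
  set ψ := φ₀.hom.comp φ₁.hom with hψ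
  set K := ψ.ker with hK
  -- `ℓ₀` and `ℓ₁` are nonzero
  have h0 : ℓ₀ ≠ 0 := by
    rw [← hdeg]
    exact (extDeg_pos L (ptField W₁ (φ₁.hom Q))).ne'
  have h1 : ℓ₁ ≠ 0 := by
    intro h
    obtain ⟨p, hp_ge, hp⟩ := Nat.exists_infinite_primes (ℓ₀ + 1)
    have hd := hdvd p hp (h ▸ dvd_zero p)
    have := Nat.le_of_dvd (Nat.pos_of_ne_zero h0) hd
    omega
  -- equivariance of the composition
  have hcompmap : ∀ (f : kbar k →ₐ[k] kbar k) (R : (W₂.toAffine.baseChange (kbar k)).Point),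
      ψ (Point.map (W' := W₂.toAffine) f R) = Point.map (W' := W₀.toAffine) f (ψ R) := by
    intro f R
    rw [hψ, AddMonoidHom.comp_apply, AddMonoidHom.comp_apply,
      φ₁.equivariant, φ₀.equivariant]
  -- the cocycle
  set c : (kbar k ≃ₐ[↥L] kbar k) → (W₂.toAffine.baseChange (kbar k)).Point :=
    fun σ => Point.map (W' := W₂.toAffine) (resHom L σ) Q - Q with hc
  have hψQ : ψ Q = P := hQ
  have hcK : ∀ σ, c σ ∈ K := by
    intro σ
    have : ψ (c σ) = 0 := by
      rw [hc, map_sub, hcompmap, hψQ,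
        map_eq_self_of_fix (resHom L σ) P (fun z hz => resHom_fixes L σ hz), sub_self]
    exact this
  have hfixker : ∀ (σ : kbar k ≃ₐ[↥L] kbar k) (T : (W₂.toAffine.baseChange (kbar k)).Point), T ∈ K →
      Point.map (W' := W₂.toAffine) (resHom L σ) T = T := by
    intro σ T hT
    exact map_eq_self_of_fix _ T fun z hz => resHom_fixes L σ (hrat T hT hz)
  have hc1 : c 1 = 0 := by
    show Point.map (W' := W₂.toAffine) (resHom L 1) Q - Q = 0
    rw [map_eq_self_of_fix (resHom L 1) Q fun z _ => rfl, sub_self]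
  have hcocycle : ∀ σ τ, c (σ * τ) = c τ + c σ := by
    intro σ τ
    have hmm : Point.map (W' := W₂.toAffine) (resHom L (σ * τ)) Q
        = Point.map (W' := W₂.toAffine) (resHom L σ) (Point.map (W' := W₂.toAffine) (resHom L τ) Q) := by
      rw [Point.map_map]
      rfl
    have e2 : Point.map (W' := W₂.toAffine) (resHom L σ) (c τ)
        = Point.map (W' := W₂.toAffine) (resHom L σ) (Point.map (W' := W₂.toAffine) (resHom L τ) Q)
          - Point.map (W' := W₂.toAffine) (resHom L σ) Q := by
      rw [hc]; exact map_sub _ _ _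
    have e1 : Point.map (W' := W₂.toAffine) (resHom L σ) (c τ) = c τ := hfixker σ _ (hcK τ)
    calc c (σ * τ) = Point.map (W' := W₂.toAffine) (resHom L σ) (Point.map (W' := W₂.toAffine) (resHom L τ) Q) - Q := by
          show Point.map (W' := W₂.toAffine) (resHom L (σ * τ)) Q - Q = _
          rw [hmm]
      _ = (Point.map (W' := W₂.toAffine) (resHom L σ) (Point.map (W' := W₂.toAffine) (resHom L τ) Q)
            - Point.map (W' := W₂.toAffine) (resHom L σ) Q) + (Point.map (W' := W₂.toAffine) (resHom L σ) Q - Q) := by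
          rw [sub_add_sub_cancel]
      _ = c τ + c σ := by rw [← e2, e1, hc]
  have hcinv : ∀ σ, c σ⁻¹ = -(c σ) := by
    intro σ
    have := hcocycle σ⁻¹ σ
    rw [inv_mul_cancel, hc1] at this
    exact eq_neg_of_add_eq_zero_right this.symm
  -- the subgroup H of K
  set H : AddSubgroup ((W₂.toAffine.baseChange (kbar k)).Point) :=
    { carrier := Set.range c
      zero_mem' := ⟨1, hc1⟩
      add_mem' := by
        rintro _ _ ⟨σ, rfl⟩ ⟨τ, rfl⟩
        exact ⟨τ * σ, hcocycle τ σ⟩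
      neg_mem' := by
        rintro _ ⟨σ, rfl⟩
        exact ⟨σ⁻¹, hcinv σ⟩ } with hH
  have hHK : H ≤ K := by rintro _ ⟨σ, rfl⟩; exact hcK σ
  have hkerle : φ₁.hom.ker ≤ K := by
    intro x hx
    have hx' : φ₁.hom x = 0 := hx
    show ψ x = 0
    rw [hψ, AddMonoidHom.comp_apply, hx', map_zero]
  -- card K = ℓ₀ * ℓ₁
  have hcardK : Nat.card ↥K = ℓ₀ * ℓ₁ := by
    set g := φ₁.hom.comp K.subtype with hg
    have hker : g.ker = (φ₁.hom.ker).addSubgroupOf K := by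
      ext x
      simp [hg, AddMonoidHom.mem_ker, AddSubgroup.mem_addSubgroupOf]
    have hrange : g.range = φ₀.hom.ker := by
      ext y
      constructor
      · rintro ⟨x, rfl⟩
        have : ψ x.1 = 0 := x.2
        rw [hψ, AddMonoidHom.comp_apply] at this
        exact this
      · intro hy
        obtain ⟨x, rfl⟩ := φ₁.surj y
        have hxK : x ∈ K := by
          show ψ x = 0
          rw [hψ, AddMonoidHom.comp_apply]
          exact hy
        exact ⟨⟨x, hxK⟩, rfl⟩
    rw [AddSubgroup.card_eq_card_quotient_mul_card_addSubgroup g.ker,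
      Nat.card_congr (QuotientAddGroup.quotientKerEquivRange g).toEquiv, hrange,
      φ₀.card_ker, hker,
      Nat.card_congr (AddSubgroup.addSubgroupOfEquivOfLe hkerle).toEquiv,
      φ₁.card_ker]
  -- K.map φ₁.hom = ker φ₀
  have hKmapeq : K.map φ₁.hom = φ₀.hom.ker := by
    ext y
    constructor
    · rintro ⟨x, hx, rfl⟩
      have : ψ x = 0 := hx
      rw [hψ, AddMonoidHom.comp_apply] at this
      exact this
    · intro hy
      obtain ⟨x, rfl⟩ := φ₁.surj y
      have hxK : x ∈ K := by
        show ψ x = 0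
        rw [hψ, AddMonoidHom.comp_apply]
        exact hy
      exact ⟨x, hxK, rfl⟩
  have hKmap : Nat.card ↥(K.map φ₁.hom) = ℓ₀ := by rw [hKmapeq, φ₀.card_ker]
  -- card of the image of H under φ₁ equals ℓ₀, via the degree hypothesis
  have hHmap : Nat.card ↥(H.map φ₁.hom) = ℓ₀ := by
    have horb₁ : Nat.card (Set.range (fun σ : kbar k ≃ₐ[↥L] kbar k =>
        Point.map (W' := W₁.toAffine) (resHom L σ) (φ₁.hom Q))) = ℓ₀ := by
      rw [card_orbit L W₁ (φ₁.hom Q)]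
      exact hdeg
    have hrel : ∀ σ, Point.map (W' := W₁.toAffine) (resHom L σ) (φ₁.hom Q) = φ₁.hom (c σ) + φ₁.hom Q := by
      intro σ
      rw [← φ₁.equivariant, hc, map_sub, sub_add_cancel]
    have hfib : ∀ σ τ : kbar k ≃ₐ[↥L] kbar k,
        Point.map (W' := W₁.toAffine) (resHom L σ) (φ₁.hom Q) = Point.map (W' := W₁.toAffine) (resHom L τ) (φ₁.hom Q)
          ↔ φ₁.hom (c σ) = φ₁.hom (c τ) := by
      intro σ τ
      rw [hrel, hrel, add_left_inj]
    have := card_range_eq_of_fiber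
      (fun σ : kbar k ≃ₐ[↥L] kbar k => Point.map (W' := W₁.toAffine) (resHom L σ) (φ₁.hom Q))
      (fun σ => φ₁.hom (c σ)) hfib
    rw [this] at horb₁
    rw [← horb₁]
    apply Nat.card_congr
    apply Equiv.setCongr
    show (φ₁.hom '' (Set.range c) : Set _) = _
    rw [← Set.range_comp]
    rfl
  -- conclude using the group lemma
  have hHcard : Nat.card ↥H = ℓ₀ * ℓ₁ :=
    group_lemma φ₁.hom K H hHK hcyc h0 h1 hcardK φ₁.card_ker hHmap hKmap hdvd
  -- translate back to the degree
  rw [← card_orbit L W₂ Q]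
  have hfibQ : ∀ σ τ : kbar k ≃ₐ[↥L] kbar k,
      Point.map (W' := W₂.toAffine) (resHom L σ) Q = Point.map (W' := W₂.toAffine) (resHom L τ) Q ↔ c σ = c τ := by
    intro σ τ
    rw [hc]
    constructor
    · intro h; simp only [h]
    · intro h; exact sub_left_injective h
  rw [card_range_eq_of_fiber _ c hfibQ]
  exact hHcard
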